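/- Let N ≥ 1 be an integer, let f₁, …, f_N be real numbers with average f = (f₁ + ⋯ + f_N)/N, and suppose f ≠ 0. Then the simple Leslie matrix L_f of order N is invertible, and L_f⁻¹ · L_{f₁,…,f_N} = I + C, where C is the N×N matrix whose last row has j-th entry f_j/f − 1 for 1 ≤ j ≤ N and all of whose other entries are 0. -/

import Mathlib

/-- The simple Leslie matrix of order `N` with constant fertility rate `f`:
first row all `f`, subdiagonal entries `1`, all other entries `0`. -/
def leslieSimple (N : ℕ) (f : ℝ) : Matrix (Fin N) (Fin N) ℝ :=
  fun i j => if i.val = 0 then f else if i.val = j.val + 1 then 1 else 0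

/-- The general Leslie matrix of order `N` with fertility rates `F 0, …, F (N-1)`:
first row `(F 0, …, F (N-1))`, subdiagonal entries `1`, all other entries `0`. -/
def leslieGeneral (N : ℕ) (F : Fin N → ℝ) : Matrix (Fin N) (Fin N) ℝ :=
  fun i j => if i.val = 0 then F j else if i.val = j.val + 1 then 1 else 0

/-- The correction matrix `C`: its last row has `j`-th entry `F j / f - 1`,
and all other entries are `0`. -/
noncomputable def leslieCorrection (N : ℕ) (F : Fin N → ℝ) (f : ℝ) : Matrix (Fin N) (Fin N) ℝ :=
  fun i j => if i.val = N - 1 then F j / f - 1 else 0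

/-- Explicit inverse of the simple Leslie matrix. -/
noncomputable def leslieInv (N : ℕ) (f : ℝ) : Matrix (Fin N) (Fin N) ℝ :=
  fun i j => if i.val = N - 1 then (if j.val = 0 then 1 / f else -1)
    else if j.val = i.val + 1 then 1 else 0

lemma sum_if_val {N : ℕ} (g : Fin N → ℝ) (c : ℕ) (h : c < N) :
    ∑ k : Fin N, (if (k : ℕ) = c then g k else 0) = g ⟨c, h⟩ := by
  rw [Finset.sum_eq_single (⟨c, h⟩ : Fin N)]
  · simp
  · intro b _ hb
    simp only [ite_eq_right_iff]
    intro hbc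
    exact absurd (Fin.ext hbc) hb
  · simp

lemma sum_if_val_zero {N : ℕ} (g : Fin N → ℝ) (c : ℕ) (h : N ≤ c) :
    ∑ k : Fin N, (if (k : ℕ) = c then g k else 0) = 0 := by
  apply Finset.sum_eq_zero
  intro k _
  have := k.isLt
  rw [if_neg]
  omega

lemma leslie_mul_inv (N : ℕ) (hN : 1 ≤ N) (f : ℝ) (hf0 : f ≠ 0) :
    leslieSimple N f * leslieInv N f = 1 := by
  ext i j
  rw [Matrix.mul_apply]
  have hil := i.isLt
  have hjl := j.isLt
  by_cases hi : (i : ℕ) = 0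
  · by_cases hj : (j : ℕ) = 0
    · have hstep : ∀ k : Fin N, leslieSimple N f i k * leslieInv N f k j =
          (if (k : ℕ) = N - 1 then f * (1 / f) else 0) := by
        intro k
        have hk := k.isLt
        simp only [leslieSimple, leslieInv, hi, hj]
        split_ifs
        all_goals try ring
        all_goals exfalso
        all_goals try omega
        all_goals exact ‹False›
      rw [Finset.sum_congr rfl fun k _ => hstep k,
        sum_if_val (fun _ => f * (1 / f)) (N - 1) (by omega)]
      have heq : i = j := Fin.ext (by omega)
      rw [heq, Matrix.one_apply_eq]
      field_simp
    · have hstep : ∀ k : Fin N, leslieSimple N f i k * leslieInv N f k j =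
          (if (k : ℕ) = N - 1 then -f else 0) +
          (if (k : ℕ) = (j : ℕ) - 1 then f else 0) := by
        intro k
        have hk := k.isLt
        simp only [leslieSimple, leslieInv, hi]
        split_ifs
        all_goals try ring
        all_goals exfalso; omega
      rw [Finset.sum_congr rfl fun k _ => hstep k, Finset.sum_add_distrib,
        sum_if_val (fun _ => -f) (N - 1) (by omega),
        sum_if_val (fun _ => f) ((j : ℕ) - 1) (by omega)]
      have hne : i ≠ j := fun h => hj (h ▸ hi)
      rw [Matrix.one_apply_ne hne]
      ring
  · have hstep : ∀ k : Fin N, leslieSimple N f i k * leslieInv N f k j =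
        (if (k : ℕ) = (i : ℕ) - 1 then leslieInv N f k j else 0) := by
      intro k
      have hk := k.isLt
      simp only [leslieSimple]
      split_ifs
      all_goals try ring
      all_goals exfalso; omega
    rw [Finset.sum_congr rfl fun k _ => hstep k,
      sum_if_val (fun k => leslieInv N f k j) ((i : ℕ) - 1) (by omega)]
    simp only [leslieInv, Fin.val_mk]
    rw [if_neg (by omega)]
    by_cases h : i = j
    · rw [if_pos (by rw [← h]; omega), h, Matrix.one_apply_eq]
    · have hvne : (i : ℕ) ≠ (j : ℕ) := fun hc => h (Fin.ext hc)
      rw [if_neg (by omega), Matrix.one_apply_ne h]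

theorem leslie_inv_mul_general (N : ℕ) (hN : 1 ≤ N) (F : Fin N → ℝ) (f : ℝ)
    (hf : f = (∑ i, F i) / N) (hf0 : f ≠ 0) :
    IsUnit (leslieSimple N f) ∧
      (leslieSimple N f)⁻¹ * leslieGeneral N F = 1 + leslieCorrection N F f := by
  have hLB := leslie_mul_inv N hN f hf0
  refine ⟨(Matrix.isUnit_iff_isUnit_det _).mpr (Matrix.isUnit_det_of_right_inverse hLB), ?_⟩
  rw [Matrix.inv_eq_right_inv hLB]
  ext i j
  rw [Matrix.mul_apply, Matrix.add_apply]
  have hil := i.isLt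
  have hjl := j.isLt
  by_cases hi : (i : ℕ) = N - 1
  · have hstep : ∀ k : Fin N, leslieInv N f i k * leslieGeneral N F k j =
        (if (k : ℕ) = 0 then F j / f else 0) +
        (if (k : ℕ) = (j : ℕ) + 1 then -1 else 0) := by
      intro k
      have hk := k.isLt
      simp only [leslieInv, leslieGeneral, hi]
      split_ifs
      all_goals try ring
      all_goals exfalso; omega
    rw [Finset.sum_congr rfl fun k _ => hstep k, Finset.sum_add_distrib,
      sum_if_val (fun _ => F j / f) 0 (by omega)]
    by_cases hj : (j : ℕ) + 1 < N
    · rw [sum_if_val (fun _ => (-1 : ℝ)) ((j : ℕ) + 1) hj]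
      have hne : i ≠ j := Fin.ne_of_val_ne (by omega)
      rw [Matrix.one_apply_ne hne]
      simp only [leslieCorrection, if_pos hi]
      ring
    · rw [sum_if_val_zero (fun _ => (-1 : ℝ)) ((j : ℕ) + 1) (by omega)]
      have heq : i = j := Fin.ext (by omega)
      rw [heq, Matrix.one_apply_eq]
      simp only [leslieCorrection]
      rw [if_pos (heq ▸ hi)]
      ring
  · have hstep : ∀ k : Fin N, leslieInv N f i k * leslieGeneral N F k j =
        (if (k : ℕ) = (i : ℕ) + 1 then leslieGeneral N F k j else 0) := by
      intro k
      have hk := k.isLt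
      simp only [leslieInv, if_neg hi]
      split_ifs
      all_goals try ring
      all_goals exfalso; omega
    rw [Finset.sum_congr rfl fun k _ => hstep k,
      sum_if_val (fun k => leslieGeneral N F k j) ((i : ℕ) + 1) (by omega)]
    simp only [leslieGeneral, leslieCorrection, Fin.val_mk, if_neg hi]
    rw [if_neg (by omega), add_zero]
    by_cases h : i = j
    · rw [if_pos (by rw [h]), h, Matrix.one_apply_eq]
    · have hvne : (i : ℕ) ≠ (j : ℕ) := fun hc => h (Fin.ext hc)
      rw [if_neg (by omega), Matrix.one_apply_ne h]
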